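/- Let s, r, ℓ be positive integers and a, b real numbers. There exists a polynomial F in three complex variables (u, v, w) with complex coefficients such that for all u ∈ ℂ and all h ∈ ℝ, F(u, e^{ih}, e^{−ih}) = ∏_{j=1}^{s} (u − Z_j(h)); moreover F can be chosen monic of degree s in the variable u, with degree at most r·ℓ in v and degree at most r·ℓ in w. -/

import Mathlib

open Complex Real

/-- The lemniscate braid strand parametrization:
`Z s r ℓ a b j h = a·cos((r·h + 2π(j−1))/s) + i·(b/ℓ)·sin(ℓ·(r·h + 2π(j−1))/s)`. -/
noncomputable def lemniscateZ (s r ℓ : ℕ) (a b : ℝ) (j : ℕ) (h : ℝ) : ℂ :=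
  (a * Real.cos ((r * h + 2 * Real.pi * ((j : ℝ) - 1)) / s) : ℝ) +
    Complex.I * ((b / ℓ) * Real.sin (ℓ * (r * h + 2 * Real.pi * ((j : ℝ) - 1)) / s) : ℝ)

namespace LemAux
open Polynomial Finset

noncomputable section

def lemP (ℓ : ℕ) (a b : ℝ) : Polynomial ℂ :=
  Polynomial.C ((a:ℂ)/2) * (X^(ℓ+1) + X^(ℓ-1)) +
  Polynomial.C ((b:ℂ)/(2*ℓ)) * (X^(2*ℓ) - 1)

lemma lemP_key (ℓ : ℕ) (hℓ : 0 < ℓ) (a b : ℝ) (u : ℂ) (θ : ℝ) :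
    u * Complex.exp (Complex.I*θ)^ℓ - (lemP ℓ a b).eval (Complex.exp (Complex.I*θ))
    = Complex.exp (Complex.I*θ)^ℓ *
      (u - (((a * Real.cos θ : ℝ) : ℂ) + Complex.I * ((b/ℓ * Real.sin (ℓ*θ) : ℝ) : ℂ))) := by
  obtain ⟨m, rfl⟩ := Nat.exists_eq_succ_of_ne_zero hℓ.ne'
  have hw : Complex.exp (Complex.I*θ) ≠ 0 := Complex.exp_ne_zero _
  have hm : ((m:ℂ)+1) ≠ 0 := Nat.cast_add_one_ne_zero m
  have hcos : ((Real.cos θ : ℝ) : ℂ) = (Complex.exp (Complex.I*θ) + (Complex.exp (Complex.I*θ))⁻¹)/2 := by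
    rw [Complex.ofReal_cos, Complex.cos, ← Complex.exp_neg]
    ring_nf
  have hsin : ((Real.sin ((m+1:ℕ)*θ) : ℝ) : ℂ) =
      ((Complex.exp (Complex.I*θ)^(m+1))⁻¹ - Complex.exp (Complex.I*θ)^(m+1)) * Complex.I/2 := by
    rw [Complex.ofReal_sin, Complex.sin, neg_mul, Complex.exp_neg, ← Complex.exp_nat_mul]
    push_cast
    ring_nf
  simp only [lemP, eval_add, eval_mul, eval_C, eval_pow, eval_X, eval_sub, eval_one,
    Complex.ofReal_mul, Complex.ofReal_div, Complex.ofReal_natCast, hcos, hsin]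
  push_cast
  field_simp
  ring_nf
  simp only [Complex.I_sq, Nat.succ_eq_add_one]
  ring

lemma coeff_comp_C_mul_X (p : Polynomial ℂ) (z : ℂ) (n : ℕ) :
    (p.comp (Polynomial.C z * Polynomial.X)).coeff n = z^n * p.coeff n := by
  rw [comp_eq_sum_left, Polynomial.coeff_sum, Polynomial.sum]
  simp only [mul_pow, ← Polynomial.C_pow, ← mul_assoc, ← Polynomial.C_mul,
    Polynomial.coeff_C_mul, Polynomial.coeff_X_pow, mul_ite, mul_one, mul_zero]
  rw [Finset.sum_ite_eq p.support n (fun e => p.coeff e * z ^ e)]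
  by_cases h : n ∈ p.support
  · simp [h, mul_comm]
  · simp [h, Polynomial.notMem_support_iff.mp h]

lemma coeff_vanish {s : ℕ} {z : ℂ} (hz : IsPrimitiveRoot z s) (p : Polynomial ℂ)
    (hp : p.comp (Polynomial.C z * Polynomial.X) = p) {n : ℕ} (hn : ¬ s ∣ n) :
    p.coeff n = 0 := by
  have h1 : z^n * p.coeff n = p.coeff n := by
    conv_rhs => rw [← hp]
    rw [coeff_comp_C_mul_X]
  have h2 : z^n ≠ 1 := fun h => hn ((hz.pow_eq_one_iff_dvd n).mp h)
  by_contra hc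
  exact h2 (mul_right_cancel₀ hc (by rw [h1, one_mul]))

def zet (s : ℕ) : ℂ := Complex.exp (2 * Real.pi * Complex.I / s)

def qq (s ℓ : ℕ) (j : ℕ) : Polynomial ℂ := X^ℓ * Polynomial.C (zet s ^ (j*ℓ))

def pp (s ℓ : ℕ) (a b : ℝ) (j : ℕ) : Polynomial ℂ :=
  (lemP ℓ a b).comp (Polynomial.C (zet s ^ j) * X)

def fct (s ℓ : ℕ) (a b : ℝ) (j : ℕ) : Polynomial (Polynomial ℂ) :=
  Polynomial.C (qq s ℓ j) * X - Polynomial.C (pp s ℓ a b j)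

def QQ (s ℓ : ℕ) (a b : ℝ) : Polynomial (Polynomial ℂ) :=
  ∏ j ∈ Finset.range s, fct s ℓ a b j

def sig (s : ℕ) : Polynomial ℂ →+* Polynomial ℂ :=
  Polynomial.eval₂RingHom Polynomial.C (Polynomial.C (zet s) * X)

lemma sig_apply (s : ℕ) (p : Polynomial ℂ) :
    sig s p = p.comp (Polynomial.C (zet s) * X) := rfl

lemma hzet (s : ℕ) (hs : 0 < s) : IsPrimitiveRoot (zet s) s :=
  Complex.isPrimitiveRoot_exp s hs.ne'

lemma zet_pow_s (s : ℕ) (hs : 0 < s) : zet s ^ s = 1 := (hzet s hs).pow_eq_one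

lemma sig_qq (s ℓ : ℕ) (j : ℕ) : sig s (qq s ℓ j) = qq s ℓ (j+1) := by
  rw [sig_apply, qq, qq, mul_comp, pow_comp, X_comp, C_comp, mul_pow, ← Polynomial.C_pow]
  have : (j+1)*ℓ = ℓ + j*ℓ := by ring
  rw [this, pow_add, Polynomial.C_mul]
  ring

lemma sig_pp (s ℓ : ℕ) (a b : ℝ) (j : ℕ) : sig s (pp s ℓ a b j) = pp s ℓ a b (j+1) := by
  rw [sig_apply, pp, pp, comp_assoc, mul_comp, C_comp, X_comp, ← mul_assoc, ← Polynomial.C_mul,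
    ← pow_succ]

lemma fct_map_sig (s ℓ : ℕ) (a b : ℝ) (j : ℕ) :
    (fct s ℓ a b j).map (sig s) = fct s ℓ a b (j+1) := by
  simp only [fct, Polynomial.map_sub, Polynomial.map_mul, map_C, map_X, sig_qq, sig_pp]

lemma fct_s (s ℓ : ℕ) (hs : 0 < s) (a b : ℝ) : fct s ℓ a b s = fct s ℓ a b 0 := by
  simp [fct, qq, pp, pow_mul, zet_pow_s s hs]

lemma fct_ne_zero (s ℓ : ℕ) (a b : ℝ) (j : ℕ) : fct s ℓ a b j ≠ 0 := by
  intro h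
  have h1 : (fct s ℓ a b j).coeff 1 = qq s ℓ j := by
    simp [fct, coeff_sub, Polynomial.coeff_C_mul, Polynomial.coeff_X_one, Polynomial.coeff_C]
  have h2 : qq s ℓ j ≠ 0 := by
    rw [qq]
    refine mul_ne_zero (pow_ne_zero _ X_ne_zero) ?_
    simp only [ne_eq, Polynomial.C_eq_zero]
    exact pow_ne_zero _ (Complex.exp_ne_zero _)
  rw [h] at h1
  simp at h1
  exact h2 h1.symm

lemma QQ_map_sig (s ℓ : ℕ) (hs : 0 < s) (a b : ℝ) : (QQ s ℓ a b).map (sig s) = QQ s ℓ a b := by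
  rw [QQ, Polynomial.map_prod]
  simp only [fct_map_sig]
  have key : (∏ j ∈ Finset.range s, fct s ℓ a b (j+1)) * fct s ℓ a b 0
      = (∏ j ∈ Finset.range s, fct s ℓ a b j) * fct s ℓ a b 0 := by
    rw [← Finset.prod_range_succ', Finset.prod_range_succ, fct_s s ℓ hs]
  exact mul_right_cancel₀ (fct_ne_zero s ℓ a b 0) key

lemma QQ_coeff_vanish (s ℓ : ℕ) (hs : 0 < s) (a b : ℝ) (k : ℕ) {n : ℕ} (hn : ¬ s ∣ n) :
    ((QQ s ℓ a b).coeff k).coeff n = 0 := by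
  refine coeff_vanish (hzet s hs) _ ?_ hn
  conv_rhs => rw [← QQ_map_sig s ℓ hs a b]
  rw [Polynomial.coeff_map, sig_apply]

lemma lemP_natDegree (ℓ : ℕ) (a b : ℝ) (hℓ : 0 < ℓ) : (lemP ℓ a b).natDegree ≤ 2*ℓ := by
  rw [lemP]
  compute_degree
  all_goals omega

lemma coeff_prod_linear {R : Type*} [CommRing R] (f g : ℕ → R[X]) :
    ∀ n : ℕ, (∏ j ∈ Finset.range n, (Polynomial.C (f j) * X - Polynomial.C (g j))).coeff n
      = ∏ j ∈ Finset.range n, f j := by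
  intro n
  induction n with
  | zero => simp
  | succ n ih =>
    rw [Finset.prod_range_succ, Finset.prod_range_succ, ← ih]
    have hd : (∏ j ∈ Finset.range n, (Polynomial.C (f j) * X - Polynomial.C (g j))).natDegree ≤ n := by
      refine le_trans (Polynomial.natDegree_prod_le _ _) ?_
      refine le_trans (Finset.sum_le_card_nsmul _ _ 1 fun j _ => ?_) (by simp)
      rw [sub_eq_add_neg, ← Polynomial.C_neg]
      exact Polynomial.natDegree_linear_le
    rw [mul_sub, coeff_sub, show ∀ P : (R[X])[X], P * (Polynomial.C (f n) * X)
        = (P * Polynomial.C (f n)) * X by intro P; ring, coeff_mul_X, coeff_mul_C, coeff_mul_C,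
      Polynomial.coeff_eq_zero_of_natDegree_lt (lt_of_le_of_lt hd (Nat.lt_succ_self n)),
      zero_mul, sub_zero]

lemma natDegree_prod_coeff_le (f : ℕ → Polynomial (Polynomial ℂ)) (d : ℕ)
    (hf : ∀ j k, ((f j).coeff k).natDegree ≤ d) :
    ∀ n k, ((∏ j ∈ Finset.range n, f j).coeff k).natDegree ≤ n * d := by
  intro n
  induction n with
  | zero =>
    intro k
    rcases k with _ | k <;> simp [Polynomial.coeff_one]
  | succ n ih =>
    intro k
    rw [Finset.prod_range_succ, Polynomial.coeff_mul]
    refine Polynomial.natDegree_sum_le_of_forall_le _ _ fun x hx => ?_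
    refine le_trans Polynomial.natDegree_mul_le (le_trans (add_le_add (ih x.1) (hf n x.2)) ?_)
    rw [Nat.succ_mul]

lemma qq_natDegree (s ℓ j : ℕ) : (qq s ℓ j).natDegree ≤ 2*ℓ := by
  rw [qq]
  compute_degree
  omega

lemma pp_natDegree (s ℓ : ℕ) (a b : ℝ) (hℓ : 0 < ℓ) (j : ℕ) :
    (pp s ℓ a b j).natDegree ≤ 2*ℓ := by
  refine le_trans Polynomial.natDegree_comp_le ?_
  have h1 : (Polynomial.C (zet s ^ j) * X).natDegree ≤ 1 := by
    refine le_trans (natDegree_C_mul_le _ _) (by simp)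
  calc (lemP ℓ a b).natDegree * (Polynomial.C (zet s ^ j) * X).natDegree
      ≤ (2*ℓ) * 1 := Nat.mul_le_mul (lemP_natDegree ℓ a b hℓ) h1
    _ = 2*ℓ := by ring

lemma fct_coeff_natDegree (s ℓ : ℕ) (a b : ℝ) (hℓ : 0 < ℓ) (j k : ℕ) :
    ((fct s ℓ a b j).coeff k).natDegree ≤ 2*ℓ := by
  rcases k with _ | _ | k
  · simpa [fct, coeff_sub, Polynomial.coeff_C_mul] using pp_natDegree s ℓ a b hℓ j
  · simpa [fct, coeff_sub, Polynomial.coeff_C_mul, Polynomial.coeff_C] using qq_natDegree s ℓ j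
  · simp [fct, coeff_sub, Polynomial.coeff_C_mul, Polynomial.coeff_C]

lemma QQ_coeff_natDegree (s ℓ : ℕ) (a b : ℝ) (hℓ : 0 < ℓ) (k : ℕ) :
    ((QQ s ℓ a b).coeff k).natDegree ≤ s * (2*ℓ) :=
  natDegree_prod_coeff_le _ _ (fun j k => fct_coeff_natDegree s ℓ a b hℓ j k) s k

lemma QQ_natDegree (s ℓ : ℕ) (a b : ℝ) : (QQ s ℓ a b).natDegree ≤ s := by
  refine le_trans (Polynomial.natDegree_prod_le _ _) ?_
  refine le_trans (Finset.sum_le_card_nsmul _ _ 1 fun j _ => ?_) (by simp)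
  rw [fct, sub_eq_add_neg, ← Polynomial.C_neg]
  exact Polynomial.natDegree_linear_le

def NN (s : ℕ) : ℕ := ∑ j ∈ Finset.range s, j

lemma QQ_coeff_s (s ℓ : ℕ) (a b : ℝ) :
    (QQ s ℓ a b).coeff s = X^(s*ℓ) * Polynomial.C (zet s ^ (NN s * ℓ)) := by
  rw [QQ]
  have : ∀ j, fct s ℓ a b j = Polynomial.C (qq s ℓ j) * X - Polynomial.C (pp s ℓ a b j) :=
    fun j => rfl
  rw [show (∏ j ∈ Finset.range s, fct s ℓ a b j) = ∏ j ∈ Finset.range s,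
    (Polynomial.C (qq s ℓ j) * X - Polynomial.C (pp s ℓ a b j)) from rfl, coeff_prod_linear]
  simp only [qq]
  rw [Finset.prod_mul_distrib, Finset.prod_const, Finset.card_range, ← pow_mul, ← map_prod,
    Finset.prod_pow_eq_pow_sum, ← Finset.sum_mul, NN, mul_comm ℓ s]

def sgn (s ℓ : ℕ) : ℂ := zet s ^ (NN s * ℓ)

lemma sgn_mul (s ℓ : ℕ) (hs : 0 < s) : sgn s ℓ * zet s ^ (NN s * ℓ) = 1 := by
  rw [sgn, ← pow_add]
  have h2 : NN s * ℓ + NN s * ℓ = s * ((s-1) * ℓ) := by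
    have h3 := Finset.sum_range_id_mul_two s
    have h4 : NN s * ℓ + NN s * ℓ = (NN s * 2) * ℓ := by ring
    rw [h4, NN, h3, Nat.mul_assoc]
  rw [h2, pow_mul, zet_pow_s s hs, one_pow]

def monF (r ℓ m : ℕ) : MvPolynomial (Fin 2) ℂ :=
  if ℓ ≤ m then (MvPolynomial.X 0)^(r*(m-ℓ)) else (MvPolynomial.X 1)^(r*(ℓ-m))

def phiF (s r ℓ : ℕ) (c : Polynomial ℂ) : MvPolynomial (Fin 2) ℂ :=
  ∑ m ∈ Finset.range (2*ℓ+1), MvPolynomial.C (sgn s ℓ * c.coeff (m*s)) * monF r ℓ m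

def FF (s r ℓ : ℕ) (a b : ℝ) : Polynomial (MvPolynomial (Fin 2) ℂ) :=
  ∑ k ∈ Finset.range (s+1), Polynomial.C (phiF s r ℓ ((QQ s ℓ a b).coeff k)) * X^k

lemma FF_coeff (s r ℓ : ℕ) (a b : ℝ) (k : ℕ) :
    (FF s r ℓ a b).coeff k
      = if k ∈ Finset.range (s+1) then phiF s r ℓ ((QQ s ℓ a b).coeff k) else 0 := by
  rw [FF, Polynomial.finset_sum_coeff]
  simp only [Polynomial.coeff_C_mul, Polynomial.coeff_X_pow, mul_ite, mul_one, mul_zero]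
  rw [Finset.sum_ite_eq (Finset.range (s+1)) k (fun j => phiF s r ℓ ((QQ s ℓ a b).coeff j))]

lemma FF_coeff_s (s r ℓ : ℕ) (a b : ℝ) (hs : 0 < s) : (FF s r ℓ a b).coeff s = 1 := by
  rw [FF_coeff, if_pos (Finset.mem_range.2 (Nat.lt_succ_self s)), QQ_coeff_s, phiF]
  have hco : ∀ m : ℕ,
      (X^(s*ℓ) * Polynomial.C (zet s ^ (NN s * ℓ))).coeff (m*s)
        = if m = ℓ then zet s ^ (NN s * ℓ) else 0 := by
    intro m
    rw [mul_comm, Polynomial.coeff_C_mul, Polynomial.coeff_X_pow]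
    by_cases hm : m = ℓ
    · simp [hm, mul_comm]
    · rw [if_neg hm, if_neg, mul_zero]
      intro hc
      exact hm (Nat.eq_of_mul_eq_mul_right hs (by rw [hc, mul_comm]))
  simp only [hco]
  rw [Finset.sum_eq_single ℓ]
  · rw [if_pos rfl, monF, if_pos le_rfl, Nat.sub_self, Nat.mul_zero, pow_zero, mul_one,
      sgn_mul s ℓ hs, map_one]
  · intro m _ hm
    rw [if_neg hm, mul_zero, map_zero, zero_mul]
  · intro hl
    exact absurd (Finset.mem_range.2 (by omega)) hl

lemma FF_natDegree_le (s r ℓ : ℕ) (a b : ℝ) : (FF s r ℓ a b).natDegree ≤ s := by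
  refine Polynomial.natDegree_sum_le_of_forall_le _ _ fun k hk => ?_
  refine le_trans (natDegree_C_mul_le _ _) ?_
  rw [Polynomial.natDegree_X_pow]
  exact Nat.lt_succ_iff.mp (Finset.mem_range.mp hk)

lemma FF_monic (s r ℓ : ℕ) (a b : ℝ) (hs : 0 < s) : (FF s r ℓ a b).Monic :=
  Polynomial.monic_of_natDegree_le_of_coeff_eq_one s (FF_natDegree_le s r ℓ a b)
    (FF_coeff_s s r ℓ a b hs)

lemma FF_natDegree (s r ℓ : ℕ) (a b : ℝ) (hs : 0 < s) : (FF s r ℓ a b).natDegree = s := by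
  refine le_antisymm (FF_natDegree_le s r ℓ a b) ?_
  refine Polynomial.le_natDegree_of_ne_zero ?_
  rw [FF_coeff_s s r ℓ a b hs]
  exact one_ne_zero

lemma degreeOf_sum_le {α : Type*} (i : Fin 2) (t : Finset α)
    (f : α → MvPolynomial (Fin 2) ℂ) (d : ℕ) :
    (∀ x ∈ t, MvPolynomial.degreeOf i (f x) ≤ d) →
      MvPolynomial.degreeOf i (∑ x ∈ t, f x) ≤ d := by
  classical
  induction t using Finset.cons_induction with
  | empty => intro _; simpa using Nat.zero_le d
  | cons x t hx ih =>
    intro h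
    rw [Finset.sum_cons]
    refine le_trans (MvPolynomial.degreeOf_add_le _ _ _) (max_le ?_ ?_)
    · exact h _ (Finset.mem_cons_self _ _)
    · exact ih fun y hy => h y (Finset.mem_cons.2 (Or.inr hy))

lemma degreeOf_X_pow_le (i j : Fin 2) (e : ℕ) :
    MvPolynomial.degreeOf i ((MvPolynomial.X j : MvPolynomial (Fin 2) ℂ)^e) ≤ e := by
  rw [MvPolynomial.X_pow_eq_monomial, MvPolynomial.degreeOf_le_iff]
  intro m hm
  rw [MvPolynomial.support_monomial, if_neg one_ne_zero, Finset.mem_singleton] at hm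
  subst hm
  classical
  rw [Finsupp.single_apply]
  split <;> omega

lemma degreeOf_monF_le (r ℓ : ℕ) (i : Fin 2) (m : ℕ) (hm : m ≤ 2*ℓ) :
    MvPolynomial.degreeOf i (monF r ℓ m) ≤ r*ℓ := by
  rw [monF]; split_ifs with h
  · exact le_trans (degreeOf_X_pow_le i 0 _) (Nat.mul_le_mul_left r (by omega))
  · exact le_trans (degreeOf_X_pow_le i 1 _) (Nat.mul_le_mul_left r (by omega))

lemma degreeOf_phiF_le (s r ℓ : ℕ) (i : Fin 2) (c : Polynomial ℂ) :
    MvPolynomial.degreeOf i (phiF s r ℓ c) ≤ r*ℓ := by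
  rw [phiF]
  refine degreeOf_sum_le i _ _ _ (fun m hm => ?_)
  refine le_trans (MvPolynomial.degreeOf_mul_le _ _ _) ?_
  rw [MvPolynomial.degreeOf_C]
  simpa using degreeOf_monF_le r ℓ i m (by simp only [Finset.mem_range] at hm; omega)

lemma FF_degreeOf (s r ℓ : ℕ) (a b : ℝ) (i : Fin 2) (k : ℕ) :
    MvPolynomial.degreeOf i ((FF s r ℓ a b).coeff k) ≤ r*ℓ := by
  rw [FF_coeff]
  split_ifs
  · exact degreeOf_phiF_le s r ℓ i _
  · simpa using Nat.zero_le (r*ℓ)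

lemma QQ_eval (s ℓ : ℕ) (a b : ℝ) (u ω : ℂ) :
    Polynomial.eval u ((QQ s ℓ a b).map (Polynomial.evalRingHom ω))
      = ∏ j ∈ Finset.range s,
          (u * (zet s^j * ω)^ℓ - (lemP ℓ a b).eval (zet s^j * ω)) := by
  rw [QQ, Polynomial.map_prod, Polynomial.eval_prod]
  refine Finset.prod_congr rfl fun j _ => ?_
  simp only [fct, Polynomial.map_sub, Polynomial.map_mul, map_C, map_X, eval_sub, eval_mul,
    eval_C, eval_X, Polynomial.coe_evalRingHom, qq, pp, Polynomial.eval_comp,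
    Polynomial.eval_mul, Polynomial.eval_pow]
  rw [mul_pow, ← pow_mul]
  ring

lemma eval_multiples (s ℓ : ℕ) (hs : 0 < s) (c : Polynomial ℂ)
    (hdeg : c.natDegree ≤ s*(2*ℓ)) (hvan : ∀ n, ¬ s ∣ n → c.coeff n = 0) (ω : ℂ) :
    Polynomial.eval ω c = ∑ m ∈ Finset.range (2*ℓ+1), c.coeff (m*s) * ω^(m*s) := by
  rw [Polynomial.eval_eq_sum_range' (Nat.lt_succ_of_le hdeg)]
  have hinj : ∀ x ∈ Finset.range (2*ℓ+1), ∀ y ∈ Finset.range (2*ℓ+1),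
      x*s = y*s → x = y := fun x _ y _ hxy => Nat.eq_of_mul_eq_mul_right hs hxy
  have himg : ∑ n ∈ (Finset.range (2*ℓ+1)).image (fun m => m*s), c.coeff n * ω^n
      = ∑ m ∈ Finset.range (2*ℓ+1), c.coeff (m*s) * ω^(m*s) :=
    Finset.sum_image hinj
  rw [← himg]
  refine (Finset.sum_subset ?_ ?_).symm
  · intro n hn
    rw [Finset.mem_image] at hn
    obtain ⟨m, hm, rfl⟩ := hn
    rw [Finset.mem_range] at hm ⊢
    have : m * s ≤ s * (2*ℓ) := by
      rw [mul_comm s]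
      exact Nat.mul_le_mul_right s (by omega)
    omega
  · intro n hn hnotin
    by_cases hdvd : s ∣ n
    · obtain ⟨t, rfl⟩ := hdvd
      exfalso
      apply hnotin
      rw [Finset.mem_image]
      refine ⟨t, ?_, mul_comm t s⟩
      rw [Finset.mem_range] at hn ⊢
      have : s * t ≤ s * (2*ℓ) := by omega
      have := Nat.le_of_mul_le_mul_left this hs
      omega
    · rw [hvan n hdvd, zero_mul]

end
end LemAux

open LemAux Polynomial Finset in
/-- There is a polynomial `F(u, v, w)`, monic of degree `s` in `u` and of degree at most
`r·ℓ` in each of `v` and `w`, such that `F(u, e^{ih}, e^{−ih}) = ∏_{j=1}^{s} (u − Z_j(h))`. -/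
theorem lemniscate_braid_polynomial (s r ℓ : ℕ) (hs : 0 < s) (hr : 0 < r) (hℓ : 0 < ℓ)
    (a b : ℝ) :
    ∃ F : Polynomial (MvPolynomial (Fin 2) ℂ),
      F.Monic ∧ F.natDegree = s ∧
      (∀ k : ℕ, MvPolynomial.degreeOf 0 (F.coeff k) ≤ r * ℓ ∧
        MvPolynomial.degreeOf 1 (F.coeff k) ≤ r * ℓ) ∧
      (∀ (u : ℂ) (h : ℝ),
        Polynomial.eval u
          (F.map (MvPolynomial.eval
            ![Complex.exp (Complex.I * h), Complex.exp (-(Complex.I * h))])) =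
        ∏ j ∈ Finset.Icc 1 s, (u - lemniscateZ s r ℓ a b j h)) := by
  classical
  refine ⟨FF s r ℓ a b, FF_monic s r ℓ a b hs, FF_natDegree s r ℓ a b hs,
    fun k => ⟨FF_degreeOf s r ℓ a b 0 k, FF_degreeOf s r ℓ a b 1 k⟩, ?_⟩
  intro u h
  set g := MvPolynomial.eval ![Complex.exp (Complex.I * h), Complex.exp (-(Complex.I * h))]
    with hg
  set A : ℂ := Complex.exp (Complex.I * h) with hA
  set ω : ℂ := Complex.exp (Complex.I * ((r*h/s : ℝ) : ℝ)) with hω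
  have hsC : (s:ℂ) ≠ 0 := Nat.cast_ne_zero.mpr hs.ne'
  have hAne : A ≠ 0 := Complex.exp_ne_zero _
  have hωs : ω^s = A^r := by
    rw [hω, hA, ← Complex.exp_nat_mul, ← Complex.exp_nat_mul]
    congr 1
    push_cast
    field_simp
  have hW : ∀ j : ℕ, zet s ^ j * ω
      = Complex.exp (Complex.I * (((r*h + 2*Real.pi*j)/s : ℝ) : ℝ)) := by
    intro j
    rw [zet, hω, ← Complex.exp_nat_mul, ← Complex.exp_add]
    congr 1
    push_cast
    field_simp
    ring
  have hZ : ∀ j : ℕ, lemniscateZ s r ℓ a b (j+1) h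
      = ((a * Real.cos ((r*h + 2*Real.pi*j)/s) : ℝ) : ℂ)
        + Complex.I * ((b/ℓ * Real.sin (ℓ*((r*h + 2*Real.pi*j)/s)) : ℝ) : ℂ) := by
    intro j
    have e1 : ((j+1:ℕ):ℝ) - 1 = (j:ℝ) := by push_cast; ring
    rw [lemniscateZ, e1, mul_div_assoc]
  have hfac : ∀ j : ℕ,
      u * (zet s^j * ω)^ℓ - (lemP ℓ a b).eval (zet s^j * ω)
        = (zet s^j*ω)^ℓ * (u - lemniscateZ s r ℓ a b (j+1) h) := by
    intro j
    rw [hW j, lemP_key ℓ hℓ a b u ((r*h + 2*Real.pi*j)/s), hZ j]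
  have hFmap : Polynomial.eval u ((FF s r ℓ a b).map g)
      = ∑ k ∈ Finset.range (s+1), g (phiF s r ℓ ((QQ s ℓ a b).coeff k)) * u^k := by
    rw [Polynomial.eval_eq_sum_range'
      (lt_of_le_of_lt Polynomial.natDegree_map_le
        (Nat.lt_succ_of_le (FF_natDegree_le s r ℓ a b)))]
    refine Finset.sum_congr rfl fun k hk => ?_
    rw [Polynomial.coeff_map, FF_coeff, if_pos hk]
  have hgX0 : g (MvPolynomial.X 0) = A := by
    rw [hg, MvPolynomial.eval_X]; rfl
  have hgX1 : g (MvPolynomial.X 1) = A⁻¹ := by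
    rw [hg, MvPolynomial.eval_X, hA, ← Complex.exp_neg]; rfl
  have hgmon : ∀ m ∈ Finset.range (2*ℓ+1), g (monF r ℓ m) * A^(r*ℓ) = A^(r*m) := by
    intro m hm
    rw [Finset.mem_range] at hm
    rw [monF]
    split_ifs with hcase
    · rw [map_pow, hgX0, ← pow_add, ← Nat.left_distrib, Nat.sub_add_cancel hcase]
    · rw [map_pow, hgX1, inv_pow,
        show r*ℓ = r*(ℓ-m) + r*m by
          rw [← Nat.left_distrib, Nat.sub_add_cancel (Nat.lt_of_not_le hcase).le],
        pow_add, ← mul_assoc, inv_mul_cancel₀ (pow_ne_zero _ hAne), one_mul]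
  have hωms : ∀ m : ℕ, ω^(m*s) = A^(r*m) := by
    intro m
    rw [mul_comm m s, pow_mul, hωs, ← pow_mul, mul_comm r m, pow_mul, ← pow_mul, mul_comm m r]
  have hphi : ∀ k : ℕ, g (phiF s r ℓ ((QQ s ℓ a b).coeff k)) * A^(r*ℓ)
      = sgn s ℓ * Polynomial.eval ω ((QQ s ℓ a b).coeff k) := by
    intro k
    rw [phiF, map_sum, Finset.sum_mul,
      eval_multiples s ℓ hs _ (QQ_coeff_natDegree s ℓ a b hℓ k)
        (fun n hn => QQ_coeff_vanish s ℓ hs a b k hn) ω, Finset.mul_sum]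
    refine Finset.sum_congr rfl fun m hm => ?_
    rw [map_mul, MvPolynomial.eval_C, mul_assoc, hgmon m hm, hωms m]
    ring
  have hQeval : Polynomial.eval u ((QQ s ℓ a b).map (Polynomial.evalRingHom ω))
      = ∑ k ∈ Finset.range (s+1), Polynomial.eval ω ((QQ s ℓ a b).coeff k) * u^k := by
    rw [Polynomial.eval_eq_sum_range'
      (lt_of_le_of_lt Polynomial.natDegree_map_le
        (Nat.lt_succ_of_le (QQ_natDegree s ℓ a b)))]
    exact Finset.sum_congr rfl fun k hk => by rw [Polynomial.coeff_map, Polynomial.coe_evalRingHom]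
  have hprodW : ∏ j ∈ Finset.range s, (zet s^j * ω)^ℓ = zet s ^ (NN s * ℓ) * A^(r*ℓ) := by
    rw [Finset.prod_pow, Finset.prod_mul_distrib, Finset.prod_pow_eq_pow_sum,
      Finset.prod_const, Finset.card_range, hωs, mul_pow, ← pow_mul, ← pow_mul, NN]
  have hRHS : ∏ j ∈ Finset.Icc 1 s, (u - lemniscateZ s r ℓ a b j h)
      = ∏ j ∈ Finset.range s, (u - lemniscateZ s r ℓ a b (j+1) h) := by
    rw [← Finset.Ico_add_one_right_eq_Icc, Finset.prod_Ico_eq_prod_range]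
    exact Finset.prod_congr (by norm_num) fun j _ => by rw [Nat.add_comm]
  have main : Polynomial.eval u ((FF s r ℓ a b).map g) * A^(r*ℓ)
      = (∏ j ∈ Finset.range s, (u - lemniscateZ s r ℓ a b (j+1) h)) * A^(r*ℓ) := by
    calc Polynomial.eval u ((FF s r ℓ a b).map g) * A^(r*ℓ)
        = ∑ k ∈ Finset.range (s+1),
            (g (phiF s r ℓ ((QQ s ℓ a b).coeff k)) * A^(r*ℓ)) * u^k := by
          rw [hFmap, Finset.sum_mul]; exact Finset.sum_congr rfl fun k _ => by ring
      _ = sgn s ℓ * ∑ k ∈ Finset.range (s+1),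
            Polynomial.eval ω ((QQ s ℓ a b).coeff k) * u^k := by
          rw [Finset.mul_sum]; exact Finset.sum_congr rfl fun k _ => by rw [hphi k]; ring
      _ = sgn s ℓ * ∏ j ∈ Finset.range s,
            ((zet s^j*ω)^ℓ * (u - lemniscateZ s r ℓ a b (j+1) h)) := by
          rw [← hQeval, QQ_eval]
          exact congrArg _ (Finset.prod_congr rfl fun j _ => hfac j)
      _ = (sgn s ℓ * zet s ^ (NN s * ℓ)) * A^(r*ℓ)
            * ∏ j ∈ Finset.range s, (u - lemniscateZ s r ℓ a b (j+1) h) := by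
          rw [Finset.prod_mul_distrib, hprodW]; ring
      _ = (∏ j ∈ Finset.range s, (u - lemniscateZ s r ℓ a b (j+1) h)) * A^(r*ℓ) := by
          rw [sgn_mul s ℓ hs]; ring
  rw [hRHS]
  exact mul_right_cancel₀ (pow_ne_zero _ hAne) main
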